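/- For every n ≥ 4 there exist infinitely many roots r ∈ ℤ^n of F_n = 0 with 1 + s(r) > 0 (positive roots), no two of which are permutations of each other; similarly there exist infinitely many pairwise non-permutation-equivalent roots with 1 + s(r) < 0 (negative roots). Consequently, for n ≥ 4 the graph on solutions up to permutation has infinitely many positive components and infinitely many negative components. -/

import Mathlib

open Finset

def F {n : ℕ} (x : Fin n → ℤ) : ℤ :=
  (∑ i, x i) ^ 2 - (∑ i, x i) - 4 * ∑ i, ∑ j, if i < j then x i * x j else 0

def nbr {n : ℕ} (a : Fin n → ℤ) (k : Fin n) : Fin n → ℤ :=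
  Function.update a k (2 * (∑ i ∈ univ.erase k, a i) + 1 - a k)

def height {n : ℕ} (x : Fin n → ℤ) : ℤ := |1 + ∑ i, x i|

def IsRoot {n : ℕ} (a : Fin n → ℤ) : Prop := ∀ k, height a < height (nbr a k)

/-- Solutions of `F_n = 0` identified up to permutation of coordinates. -/
def permSetoid (n : ℕ) : Setoid {x : Fin n → ℤ // F x = 0} where
  r x y := ∃ σ : Equiv.Perm (Fin n), x.1 = y.1 ∘ σ
  iseqv := by
    constructor
    · exact fun x => ⟨Equiv.refl _, rfl⟩
    · rintro x y ⟨σ, h⟩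
      exact ⟨σ.symm, by funext i; simp [h]⟩
    · rintro x y z ⟨σ, h⟩ ⟨τ, h'⟩
      exact ⟨σ.trans τ, by funext i; simp [h, h']⟩

/-- The graph on solutions up to permutation: two classes are adjacent iff they are
distinct and have representatives differing in exactly one coordinate. -/
def solGraphQ (n : ℕ) : SimpleGraph (Quotient (permSetoid n)) where
  Adj C D := C ≠ D ∧ ∃ x y : {x : Fin n → ℤ // F x = 0},
    Quotient.mk (permSetoid n) x = C ∧ Quotient.mk (permSetoid n) y = D ∧
    ∃ k, x.1 k ≠ y.1 k ∧ ∀ i, i ≠ k → x.1 i = y.1 i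
  symm := ⟨by
    rintro C D ⟨hCD, x, y, hx, hy, k, hk, h⟩
    exact ⟨hCD.symm, y, x, hy, hx, k, hk.symm, fun i hi => (h i hi).symm⟩⟩
  loopless := ⟨by rintro C ⟨h, -⟩; exact h rfl⟩

/-! ### Basic algebraic identities -/

lemma sq_sum_eq {n : ℕ} (x : Fin n → ℤ) :
    (∑ i, x i)^2 = ∑ i, (x i)^2 + 2 * ∑ i, ∑ j, if i < j then x i * x j else 0 := by
  have h1 : (∑ i, x i) * (∑ j, x j) = ∑ i, ∑ j, x i * x j :=
    Finset.sum_mul_sum _ _ _ _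
  have h2 : ∀ i : Fin n, ∑ j, x i * x j =
      (∑ j, if i < j then x i * x j else 0) + (∑ j, if j < i then x i * x j else 0)
      + x i ^ 2 := by
    intro i
    rw [← Finset.sum_add_distrib]
    have : x i ^ 2 = ∑ j, if i = j then x i * x j else 0 := by
      rw [Finset.sum_ite_eq (univ : Finset (Fin n)) i (fun j => x i * x j)]
      simp [sq]
    rw [this, ← Finset.sum_add_distrib]
    apply Finset.sum_congr rfl
    intro j _
    rcases lt_trichotomy i j with h | h | h
    · simp [h, not_lt_of_gt h, ne_of_lt h]
    · subst h; simp
    · simp [h, not_lt_of_gt h, (ne_of_lt h).symm]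
  have h3 : ∑ i, ∑ j, (if j < i then x i * x j else 0) =
      ∑ i, ∑ j, (if i < j then x i * x j else 0) := by
    rw [Finset.sum_comm]
    apply Finset.sum_congr rfl; intro i _
    apply Finset.sum_congr rfl; intro j _
    rcases lt_or_ge i j with h | h
    · simp [h, not_lt_of_gt h, mul_comm]
    · simp [not_lt.mpr h, mul_comm]
  calc (∑ i, x i)^2 = (∑ i, x i) * (∑ j, x j) := by ring
    _ = ∑ i, ∑ j, x i * x j := h1
    _ = ∑ i, ((∑ j, if i < j then x i * x j else 0)
        + (∑ j, if j < i then x i * x j else 0) + x i ^ 2) :=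
      Finset.sum_congr rfl (fun i _ => h2 i)
    _ = _ := by
      rw [Finset.sum_add_distrib, Finset.sum_add_distrib, h3]; ring

lemma F_eq {n : ℕ} (x : Fin n → ℤ) :
    F x = 2 * ∑ i, (x i)^2 - (∑ i, x i)^2 - ∑ i, x i := by
  have := sq_sum_eq x
  unfold F
  linarith

lemma sum_nbr {n : ℕ} (a : Fin n → ℤ) (k : Fin n) :
    ∑ i, nbr a k i = 3 * ∑ i, a i + 1 - 4 * a k := by
  unfold nbr
  rw [Finset.sum_update_of_mem (mem_univ k)]
  have h1 : ∑ i ∈ univ \ {k}, a i = ∑ i, a i - a k := by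
    rw [← Finset.erase_eq, Finset.sum_erase_eq_sub (mem_univ k)]
  have h2 : ∑ i ∈ univ.erase k, a i = ∑ i, a i - a k :=
    Finset.sum_erase_eq_sub (mem_univ k)
  rw [h1, h2]; ring

lemma nbr_apply_self {n : ℕ} (a : Fin n → ℤ) (k : Fin n) :
    nbr a k k = 2 * (∑ i, a i) + 1 - 3 * a k := by
  unfold nbr
  rw [Function.update_self, Finset.sum_erase_eq_sub (mem_univ k)]; ring

lemma nbr_apply_ne {n : ℕ} (a : Fin n → ℤ) (k i : Fin n) (h : i ≠ k) :
    nbr a k i = a i := Function.update_of_ne h _ _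

lemma sum_sq_nbr {n : ℕ} (a : Fin n → ℤ) (k : Fin n) :
    ∑ i, (nbr a k i)^2
      = ∑ i, (a i)^2 - (a k)^2 + (2 * (∑ i, a i) + 1 - 3 * a k)^2 := by
  rw [← Finset.add_sum_erase _ _ (mem_univ k),
    ← Finset.add_sum_erase _ (fun i => (a i)^2) (mem_univ k)]
  rw [nbr_apply_self]
  have : ∑ i ∈ univ.erase k, (nbr a k i)^2 = ∑ i ∈ univ.erase k, (a i)^2 :=
    Finset.sum_congr rfl (fun i hi => by rw [nbr_apply_ne a k i (Finset.ne_of_mem_erase hi)])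
  rw [this]; ring

lemma F_nbr {n : ℕ} (a : Fin n → ℤ) (k : Fin n) : F (nbr a k) = F a := by
  rw [F_eq, F_eq, sum_sq_nbr, sum_nbr]; ring

lemma nbr_nbr {n : ℕ} (a : Fin n → ℤ) (k : Fin n) : nbr (nbr a k) k = a := by
  funext i
  by_cases h : i = k
  · subst h
    rw [nbr_apply_self, nbr_apply_self, sum_nbr]; ring
  · rw [nbr_apply_ne _ _ _ h, nbr_apply_ne _ _ _ h]

lemma height_nbr {n : ℕ} (a : Fin n → ℤ) (k : Fin n) :
    height (nbr a k) = |3 * ∑ i, a i + 2 - 4 * a k| := by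
  unfold height; rw [sum_nbr]; congr 1; ring

lemma height_nbr_ne {n : ℕ} (a : Fin n → ℤ) (k : Fin n) :
    height (nbr a k) ≠ height a := by
  rw [height_nbr]
  unfold height
  intro h
  rcases abs_eq_abs.mp h with h | h <;> omega

/-- key uniqueness lemma: a solution has at most one weakly non-increasing direction -/
lemma unique_descent {n : ℕ} (a : Fin n → ℤ) (hF : F a = 0) {k j : Fin n} (hkj : k ≠ j)
    (hk : height (nbr a k) ≤ height a) (hj : height (nbr a j) ≤ height a) : False := by
  set s := ∑ i, a i with hs
  have hsum : 2 * ∑ i, (a i)^2 = s^2 + s := by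
    have := F_eq a; rw [hF] at this; linarith
  have key : ∀ m : Fin n, height (nbr a m) ≤ height a → (2*s+1)^2 < 16 * (a m)^2 := by
    intro m hm
    rw [height_nbr, ← hs] at hm
    unfold height at hm; rw [← hs] at hm
    have h1 : (3*s + 2 - 4*a m)^2 ≤ (1+s)^2 := by
      have := pow_le_pow_left₀ (abs_nonneg _) hm 2
      rwa [sq_abs, sq_abs] at this
    have h2 : ((2*s+1) - 4*a m) * (2*(2*s+1)+1 - 4*a m) ≤ 0 := by nlinarith
    have hne : 4 * a m ≠ 2*s+1 := by omega
    rcases lt_or_gt_of_ne hne with hlt | hgt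
    · have h3 : 2*(2*s+1)+1 ≤ 4 * a m := by nlinarith
      nlinarith
    · have h3 : 4 * a m ≤ 2*(2*s+1)+1 := by nlinarith
      nlinarith
  have hk' := key k hk
  have hj' := key j hj
  have hpair : (a k)^2 + (a j)^2 ≤ ∑ i, (a i)^2 := by
    have h1 : (a k)^2 + (a j)^2 = ∑ i ∈ ({k, j} : Finset (Fin n)), (a i)^2 :=
      (Finset.sum_pair hkj (f := fun i => (a i)^2)).symm
    rw [h1]
    exact Finset.sum_le_sum_of_subset_of_nonneg (Finset.subset_univ _)
      (fun i _ _ => sq_nonneg _)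
  nlinarith

/-! ### The descent map to the root of a component -/

noncomputable def rootRep {n : ℕ} (x : {x : Fin n → ℤ // F x = 0}) :
    Quotient (permSetoid n) :=
  if h : ∃ k, height (nbr x.1 k) < height x.1 then
    rootRep ⟨nbr x.1 h.choose, by rw [F_nbr]; exact x.2⟩
  else Quotient.mk (permSetoid n) x
termination_by (height x.1).toNat
decreasing_by
  have h1 := h.choose_spec
  have h2 : (0:ℤ) ≤ height (nbr x.1 h.choose) := abs_nonneg _
  omega

lemma rootRep_eq_root {n : ℕ} (x : {x : Fin n → ℤ // F x = 0}) (hx : IsRoot x.1) :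
    rootRep x = Quotient.mk (permSetoid n) x := by
  rw [rootRep.eq_def]
  have : ¬ ∃ k, height (nbr x.1 k) < height x.1 := by
    rintro ⟨k, hk⟩
    exact absurd (hx k) (not_lt.mpr hk.le)
  simp [this]

lemma rootRep_step {n : ℕ} (x : {x : Fin n → ℤ // F x = 0}) (k : Fin n)
    (hk : height (nbr x.1 k) < height x.1) :
    rootRep x = rootRep ⟨nbr x.1 k, by rw [F_nbr]; exact x.2⟩ := by
  rw [rootRep.eq_def]
  have h : ∃ k, height (nbr x.1 k) < height x.1 := ⟨k, hk⟩
  rw [dif_pos h]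
  have hck : h.choose = k := by
    by_contra hne
    exact unique_descent x.1 x.2 hne h.choose_spec.le hk.le
  exact congrArg rootRep (Subtype.ext (congrArg (nbr x.1) hck))

lemma nbr_comp {n : ℕ} (y : Fin n → ℤ) (σ : Equiv.Perm (Fin n)) (k : Fin n) :
    nbr (y ∘ σ) k = (nbr y (σ k)) ∘ σ := by
  funext i
  by_cases hi : i = k
  · subst hi
    show nbr (y ∘ σ) i i = nbr y (σ i) (σ i)
    rw [nbr_apply_self, nbr_apply_self]
    have : ∑ j, (y ∘ σ) j = ∑ j, y j := Equiv.sum_comp σ y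
    rw [this]; rfl
  · show nbr (y ∘ σ) k i = nbr y (σ k) (σ i)
    rw [nbr_apply_ne _ _ _ hi, nbr_apply_ne _ _ _ (fun h => hi (σ.injective h))]
    rfl

lemma height_comp {n : ℕ} (y : Fin n → ℤ) (σ : Equiv.Perm (Fin n)) :
    height (y ∘ σ) = height y := by
  unfold height
  rw [show ∑ i, (y ∘ σ) i = ∑ i, y (σ i) from rfl, Equiv.sum_comp σ y]

lemma rootRep_perm_aux {n : ℕ} (N : ℕ) :
    ∀ (x y : {x : Fin n → ℤ // F x = 0}) (σ : Equiv.Perm (Fin n)),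
      (height x.1).toNat ≤ N → x.1 = y.1 ∘ σ → rootRep x = rootRep y := by
  induction N with
  | zero =>
    intro x y σ hN hxy
    have hh : height x.1 = height y.1 := by rw [hxy, height_comp]
    by_cases hex : ∃ k, height (nbr x.1 k) < height x.1
    · obtain ⟨k, hk⟩ := hex
      have := abs_nonneg (1 + ∑ i, nbr x.1 k i)
      have hx0 : (0:ℤ) ≤ height x.1 := abs_nonneg _
      unfold height at *
      omega
    · rw [rootRep.eq_def, dif_neg hex]
      have hey : ¬ ∃ k, height (nbr y.1 k) < height y.1 := by
        rintro ⟨m, hm⟩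
        refine hex ⟨σ.symm m, ?_⟩
        have : nbr x.1 (σ.symm m) = (nbr y.1 m) ∘ σ := by
          rw [hxy]
          have := nbr_comp y.1 σ (σ.symm m)
          rwa [Equiv.apply_symm_apply] at this
        rw [this, height_comp, hh]
        exact hm
      rw [rootRep.eq_def (x := y), dif_neg hey]
      exact Quotient.sound ⟨σ, hxy⟩
  | succ N ih =>
    intro x y σ hN hxy
    have hh : height x.1 = height y.1 := by rw [hxy, height_comp]
    by_cases hex : ∃ k, height (nbr x.1 k) < height x.1
    · obtain ⟨k, hk⟩ := hex
      have hnx : nbr x.1 k = (nbr y.1 (σ k)) ∘ σ := by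
        rw [hxy]; exact nbr_comp y.1 σ k
      have hk' : height (nbr y.1 (σ k)) < height y.1 := by
        rw [← hh, ← height_comp (nbr y.1 (σ k)) σ, ← hnx]
        exact hk
      rw [rootRep_step x k hk, rootRep_step y (σ k) hk']
      apply ih _ _ σ _ hnx
      show (height (nbr x.1 k)).toNat ≤ N
      have h0 : (0:ℤ) ≤ height (nbr x.1 k) := abs_nonneg _
      omega
    · rw [rootRep.eq_def, dif_neg hex]
      have hey : ¬ ∃ k, height (nbr y.1 k) < height y.1 := by
        rintro ⟨m, hm⟩
        refine hex ⟨σ.symm m, ?_⟩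
        have : nbr x.1 (σ.symm m) = (nbr y.1 m) ∘ σ := by
          rw [hxy]
          have := nbr_comp y.1 σ (σ.symm m)
          rwa [Equiv.apply_symm_apply] at this
        rw [this, height_comp, hh]
        exact hm
      rw [rootRep.eq_def (x := y), dif_neg hey]
      exact Quotient.sound ⟨σ, hxy⟩

lemma rootRep_perm {n : ℕ} (x y : {x : Fin n → ℤ // F x = 0})
    (h : ∃ σ : Equiv.Perm (Fin n), x.1 = y.1 ∘ σ) : rootRep x = rootRep y := by
  obtain ⟨σ, hxy⟩ := h
  exact rootRep_perm_aux (height x.1).toNat x y σ le_rfl hxy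

/-- an edge of the solution graph is a Vieta move -/
lemma edge_is_nbr {n : ℕ} (x y : {x : Fin n → ℤ // F x = 0}) (k : Fin n)
    (hxk : x.1 k ≠ y.1 k) (hoff : ∀ i, i ≠ k → x.1 i = y.1 i) :
    y.1 = nbr x.1 k := by
  have hr : ∑ i ∈ univ.erase k, x.1 i = ∑ i ∈ univ.erase k, y.1 i :=
    Finset.sum_congr rfl (fun i hi => hoff i (Finset.ne_of_mem_erase hi))
  have hrq : ∑ i ∈ univ.erase k, (x.1 i)^2 = ∑ i ∈ univ.erase k, (y.1 i)^2 :=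
    Finset.sum_congr rfl (fun i hi => by rw [hoff i (Finset.ne_of_mem_erase hi)])
  have hsx : ∑ i ∈ univ.erase k, x.1 i = ∑ i, x.1 i - x.1 k :=
    Finset.sum_erase_eq_sub (mem_univ k)
  have hsy : ∑ i ∈ univ.erase k, y.1 i = ∑ i, y.1 i - y.1 k :=
    Finset.sum_erase_eq_sub (mem_univ k)
  have hqx : ∑ i ∈ univ.erase k, (x.1 i)^2 = ∑ i, (x.1 i)^2 - (x.1 k)^2 :=
    Finset.sum_erase_eq_sub (mem_univ k)
  have hqy : ∑ i ∈ univ.erase k, (y.1 i)^2 = ∑ i, (y.1 i)^2 - (y.1 k)^2 :=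
    Finset.sum_erase_eq_sub (mem_univ k)
  have hFx := F_eq x.1; rw [x.2] at hFx
  have hFy := F_eq y.1; rw [y.2] at hFy
  have key : (x.1 k - y.1 k) * (x.1 k + y.1 k - 2*(∑ i ∈ univ.erase k, x.1 i) - 1) = 0 := by
    have e1 : ∑ i, y.1 i = (∑ i ∈ univ.erase k, x.1 i) + y.1 k := by rw [hr, hsy]; ring
    have e2 : ∑ i, x.1 i = (∑ i ∈ univ.erase k, x.1 i) + x.1 k := by rw [hsx]; ring
    have e3 : ∑ i, (y.1 i)^2 = ∑ i, (x.1 i)^2 - (x.1 k)^2 + (y.1 k)^2 := by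
      rw [← hqx, hrq, hqy]; ring
    rw [e1, e3] at hFy
    rw [e2] at hFx
    nlinarith [hFx, hFy]
  have h2 : x.1 k + y.1 k = 2*(∑ i ∈ univ.erase k, x.1 i) + 1 := by
    rcases mul_eq_zero.mp key with h | h
    · exact absurd (by linarith : x.1 k = y.1 k) hxk
    · linarith
  funext i
  by_cases hi : i = k
  · subst hi
    unfold nbr
    rw [Function.update_self]
    linarith
  · rw [nbr_apply_ne _ _ _ hi]
    exact (hoff i hi).symm

lemma rootRep_edge {n : ℕ} (x y : {x : Fin n → ℤ // F x = 0}) (k : Fin n)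
    (hxk : x.1 k ≠ y.1 k) (hoff : ∀ i, i ≠ k → x.1 i = y.1 i) :
    rootRep x = rootRep y := by
  have hy : y.1 = nbr x.1 k := edge_is_nbr x y k hxk hoff
  have hx : x.1 = nbr y.1 k := by rw [hy, nbr_nbr]
  have hne : height y.1 ≠ height x.1 := by rw [hy]; exact height_nbr_ne x.1 k
  rcases lt_or_gt_of_ne hne with hlt | hgt
  · have step := rootRep_step x k (by rw [← hy]; exact hlt)
    rw [step]
    exact congrArg rootRep (Subtype.ext hy.symm)
  · have step := rootRep_step y k (by rw [← hx]; exact hgt)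
    rw [step]
    exact (congrArg rootRep (Subtype.ext hx.symm)).symm

/-! ### The component invariant -/

noncomputable def phi (n : ℕ) : Quotient (permSetoid n) → Quotient (permSetoid n) :=
  Quotient.lift rootRep (fun x y h => rootRep_perm x y h)

lemma phi_adj {n : ℕ} {C D : Quotient (permSetoid n)} (h : (solGraphQ n).Adj C D) :
    phi n C = phi n D := by
  obtain ⟨-, x, y, hx, hy, k, h1, h2⟩ := h
  subst hx; subst hy
  show rootRep x = rootRep y
  exact rootRep_edge x y k h1 h2

lemma phi_walk {n : ℕ} {C D : Quotient (permSetoid n)} (p : (solGraphQ n).Walk C D) :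
    phi n C = phi n D := by
  induction p with
  | nil => rfl
  | cons h _ ih => exact (phi_adj h).trans ih

noncomputable def Phi (n : ℕ) : (solGraphQ n).ConnectedComponent → Quotient (permSetoid n) :=
  SimpleGraph.ConnectedComponent.lift (phi n) (fun _ _ p _ => phi_walk p)

lemma Phi_mk {n : ℕ} (v : Quotient (permSetoid n)) :
    Phi n ((solGraphQ n).connectedComponentMk v) = phi n v := rfl

/-! ### Explicit families of roots -/

def pad {n : ℕ} (b0 b1 b2 b3 : ℤ) : Fin n → ℤ := fun i =>
  if i.val = 0 then b0 else if i.val = 1 then b1 else if i.val = 2 then b2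
  else if i.val = 3 then b3 else 0

lemma sum_pad {n : ℕ} (hn : 4 ≤ n) (φ : ℤ → ℤ) (hφ : φ 0 = 0) (b0 b1 b2 b3 : ℤ) :
    ∑ i : Fin n, φ (pad b0 b1 b2 b3 i) = φ b0 + φ b1 + φ b2 + φ b3 := by
  have h0 : (0:ℕ) < n := by omega
  have h1 : (1:ℕ) < n := by omega
  have h2 : (2:ℕ) < n := by omega
  have h3 : (3:ℕ) < n := by omega
  set S : Finset (Fin n) := {⟨0, h0⟩, ⟨1, h1⟩, ⟨2, h2⟩, ⟨3, h3⟩} with hS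
  have hsub : ∀ i : Fin n, i ∉ S → φ (pad b0 b1 b2 b3 i) = 0 := by
    intro i hi
    have : i.val ≠ 0 ∧ i.val ≠ 1 ∧ i.val ≠ 2 ∧ i.val ≠ 3 := by
      refine ⟨?_, ?_, ?_, ?_⟩ <;> intro h <;> apply hi <;>
        simp [hS, Fin.ext_iff, h]
    unfold pad
    rw [if_neg this.1, if_neg this.2.1, if_neg this.2.2.1, if_neg this.2.2.2, hφ]
  rw [← Finset.sum_subset (Finset.subset_univ S) (fun i _ hi => hsub i hi)]
  have : ∑ i ∈ S, φ (pad b0 b1 b2 b3 i) =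
      φ (pad b0 b1 b2 b3 ⟨0,h0⟩) + φ (pad b0 b1 b2 b3 ⟨1,h1⟩)
      + φ (pad b0 b1 b2 b3 ⟨2,h2⟩) + φ (pad b0 b1 b2 b3 ⟨3,h3⟩) := by
    rw [hS]
    rw [Finset.sum_insert (by simp [Fin.ext_iff]), Finset.sum_insert (by simp [Fin.ext_iff]),
      Finset.sum_pair (by simp [Fin.ext_iff])]
    ring
  rw [this]
  unfold pad
  norm_num

lemma rootPos {n : ℕ} (a : Fin n → ℤ) (hs : 0 ≤ ∑ i, a i)
    (h : ∀ k, 2 * a k ≤ ∑ i, a i) : IsRoot a := by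
  intro k
  unfold height
  rw [sum_nbr]
  have h1 : |1 + ∑ i, a i| = 1 + ∑ i, a i := abs_of_nonneg (by linarith)
  have h2 : 1 + (3 * ∑ i, a i + 1 - 4 * a k) ≥ (∑ i, a i) + 2 := by
    have := h k; linarith
  calc |1 + ∑ i, a i| = 1 + ∑ i, a i := h1
    _ < 1 + (3 * ∑ i, a i + 1 - 4 * a k) := by linarith
    _ ≤ |1 + (3 * ∑ i, a i + 1 - 4 * a k)| := le_abs_self _

lemma rootNeg {n : ℕ} (a : Fin n → ℤ) (hs : ∑ i, a i + 1 ≤ -1)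
    (h : ∀ k, ∑ i, a i + 1 ≤ 2 * a k) : IsRoot a := by
  intro k
  unfold height
  rw [sum_nbr]
  have h1 : |1 + ∑ i, a i| = -(1 + ∑ i, a i) := abs_of_nonpos (by linarith)
  have h2 : 1 + (3 * ∑ i, a i + 1 - 4 * a k) ≤ ∑ i, a i := by
    have := h k; linarith
  calc |1 + ∑ i, a i| = -(1 + ∑ i, a i) := h1
    _ < -(1 + (3 * ∑ i, a i + 1 - 4 * a k)) := by linarith
    _ ≤ |1 + (3 * ∑ i, a i + 1 - 4 * a k)| := neg_le_abs _

def fpos (n : ℕ) (a : ℕ) : Fin n → ℤ := pad (-(a:ℤ)) a (2*(a:ℤ)^2) (2*(a:ℤ)^2)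
def fneg (n : ℕ) (t : ℕ) : Fin n → ℤ :=
  pad (t:ℤ) (-1-(t:ℤ)) (-(2*(t:ℤ)^2+2*(t:ℤ)+1)) (-(2*(t:ℤ)^2+2*(t:ℤ)+1))

lemma sum_fpos {n : ℕ} (hn : 4 ≤ n) (a : ℕ) : ∑ i, fpos n a i = 4*(a:ℤ)^2 := by
  have := sum_pad hn id rfl (-(a:ℤ)) a (2*(a:ℤ)^2) (2*(a:ℤ)^2)
  simp only [id] at this
  unfold fpos
  rw [this]; ring

lemma sum_sq_fpos {n : ℕ} (hn : 4 ≤ n) (a : ℕ) :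
    ∑ i, (fpos n a i)^2 = 2*(a:ℤ)^2 + 8*(a:ℤ)^4 := by
  have := sum_pad hn (fun z => z^2) (by norm_num) (-(a:ℤ)) a (2*(a:ℤ)^2) (2*(a:ℤ)^2)
  unfold fpos
  rw [this]; ring

lemma F_fpos {n : ℕ} (hn : 4 ≤ n) (a : ℕ) : F (fpos n a) = 0 := by
  rw [F_eq, sum_fpos hn, sum_sq_fpos hn]; ring

lemma isRoot_fpos {n : ℕ} (hn : 4 ≤ n) (a : ℕ) : IsRoot (fpos n a) := by
  apply rootPos
  · rw [sum_fpos hn]; positivity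
  · intro k
    rw [sum_fpos hn]
    have ha : (0:ℤ) ≤ (a:ℤ) := Int.ofNat_nonneg a
    have hcases : fpos n a k = -(a:ℤ) ∨ fpos n a k = (a:ℤ) ∨ fpos n a k = 2*(a:ℤ)^2 ∨
        fpos n a k = 0 := by
      unfold fpos pad
      rcases Nat.lt_or_ge k.val 1 with h | h
      · left; simp [Nat.lt_one_iff.mp h]
      rcases Nat.lt_or_ge k.val 2 with h2 | h2
      · right; left; have : k.val = 1 := by omega
        simp [this]
      rcases Nat.lt_or_ge k.val 3 with h3 | h3
      · right; right; left; have : k.val = 2 := by omega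
        simp [this]
      rcases Nat.lt_or_ge k.val 4 with h4 | h4
      · right; right; left; have : k.val = 3 := by omega
        simp [this]
      · right; right; right
        have : k.val ≠ 0 ∧ k.val ≠ 1 ∧ k.val ≠ 2 ∧ k.val ≠ 3 := by omega
        simp [this.1, this.2.1, this.2.2.1, this.2.2.2]
    have haa : (a:ℤ) ≤ 2*(a:ℤ)^2 := by
      rcases Nat.eq_zero_or_pos a with h | h
      · subst h; norm_num
      · have : (1:ℤ) ≤ (a:ℤ) := by exact_mod_cast h
        nlinarith
    rcases hcases with h | h | h | h <;> rw [h] <;> nlinarith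

lemma sum_fneg {n : ℕ} (hn : 4 ≤ n) (t : ℕ) :
    ∑ i, fneg n t i = -(4*(t:ℤ)^2+4*(t:ℤ)+3) := by
  have := sum_pad hn id rfl (t:ℤ) (-1-(t:ℤ)) (-(2*(t:ℤ)^2+2*(t:ℤ)+1)) (-(2*(t:ℤ)^2+2*(t:ℤ)+1))
  simp only [id] at this
  unfold fneg
  rw [this]; ring

lemma sum_sq_fneg {n : ℕ} (hn : 4 ≤ n) (t : ℕ) :
    ∑ i, (fneg n t i)^2 = (t:ℤ)^2 + (1+(t:ℤ))^2 + 2*(2*(t:ℤ)^2+2*(t:ℤ)+1)^2 := by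
  have := sum_pad hn (fun z => z^2) (by norm_num) (t:ℤ) (-1-(t:ℤ))
    (-(2*(t:ℤ)^2+2*(t:ℤ)+1)) (-(2*(t:ℤ)^2+2*(t:ℤ)+1))
  unfold fneg
  rw [this]; ring

lemma F_fneg {n : ℕ} (hn : 4 ≤ n) (t : ℕ) : F (fneg n t) = 0 := by
  rw [F_eq, sum_fneg hn, sum_sq_fneg hn]; ring

lemma isRoot_fneg {n : ℕ} (hn : 4 ≤ n) (t : ℕ) : IsRoot (fneg n t) := by
  apply rootNeg
  · rw [sum_fneg hn]
    have : (0:ℤ) ≤ (t:ℤ) := Int.ofNat_nonneg t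
    nlinarith
  · intro k
    rw [sum_fneg hn]
    have ht : (0:ℤ) ≤ (t:ℤ) := Int.ofNat_nonneg t
    have hcases : fneg n t k = (t:ℤ) ∨ fneg n t k = -1-(t:ℤ) ∨
        fneg n t k = -(2*(t:ℤ)^2+2*(t:ℤ)+1) ∨ fneg n t k = 0 := by
      unfold fneg pad
      rcases Nat.lt_or_ge k.val 1 with h | h
      · left; simp [Nat.lt_one_iff.mp h]
      rcases Nat.lt_or_ge k.val 2 with h2 | h2
      · right; left; have : k.val = 1 := by omega
        simp [this]
      rcases Nat.lt_or_ge k.val 3 with h3 | h3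
      · right; right; left; have : k.val = 2 := by omega
        simp [this]
      rcases Nat.lt_or_ge k.val 4 with h4 | h4
      · right; right; left; have : k.val = 3 := by omega
        simp [this]
      · right; right; right
        have : k.val ≠ 0 ∧ k.val ≠ 1 ∧ k.val ≠ 2 ∧ k.val ≠ 3 := by omega
        simp [this.1, this.2.1, this.2.2.1, this.2.2.2]
    rcases hcases with h | h | h | h <;> rw [h] <;> nlinarith

lemma fpos_inj {n : ℕ} (hn : 4 ≤ n) {i j : ℕ}
    (h : ∃ σ : Equiv.Perm (Fin n), fpos n i = fpos n j ∘ σ) : i = j := by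
  obtain ⟨σ, hσ⟩ := h
  have hsum : ∑ m, fpos n i m = ∑ m, fpos n j m := by
    rw [hσ, show ∑ m, (fpos n j ∘ σ) m = ∑ m, fpos n j (σ m) from rfl,
      Equiv.sum_comp σ (fpos n j)]
  rw [sum_fpos hn, sum_fpos hn] at hsum
  have : (i:ℤ) = j := by nlinarith [Int.ofNat_nonneg i, Int.ofNat_nonneg j]
  exact_mod_cast this

lemma fneg_inj {n : ℕ} (hn : 4 ≤ n) {i j : ℕ}
    (h : ∃ σ : Equiv.Perm (Fin n), fneg n i = fneg n j ∘ σ) : i = j := by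
  obtain ⟨σ, hσ⟩ := h
  have hsum : ∑ m, fneg n i m = ∑ m, fneg n j m := by
    rw [hσ, show ∑ m, (fneg n j ∘ σ) m = ∑ m, fneg n j (σ m) from rfl,
      Equiv.sum_comp σ (fneg n j)]
  rw [sum_fneg hn, sum_fneg hn] at hsum
  have : (i:ℤ) = j := by nlinarith [Int.ofNat_nonneg i, Int.ofNat_nonneg j]
  exact_mod_cast this

/-! ### Main theorem -/

/-- For `n ≥ 4` there are infinitely many pairwise non-permutation-equivalent positive
roots, and infinitely many pairwise non-permutation-equivalent negative roots, of
`F_n = 0`; consequently the graph on solutions up to permutation has infinitely many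
positive components and infinitely many negative components. -/
theorem stmt_8 (n : ℕ) (hn : 4 ≤ n) :
    (∃ f : ℕ → (Fin n → ℤ),
      (∀ i, F (f i) = 0 ∧ IsRoot (f i) ∧ 0 < 1 + ∑ j, f i j) ∧
      ∀ i j, (∃ σ : Equiv.Perm (Fin n), f i = f j ∘ σ) → i = j) ∧
    (∃ f : ℕ → (Fin n → ℤ),
      (∀ i, F (f i) = 0 ∧ IsRoot (f i) ∧ 1 + ∑ j, f i j < 0) ∧
      ∀ i j, (∃ σ : Equiv.Perm (Fin n), f i = f j ∘ σ) → i = j) ∧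
    {C : (solGraphQ n).ConnectedComponent |
      ∃ x : {x : Fin n → ℤ // F x = 0}, 0 < 1 + ∑ j, x.1 j ∧
        (solGraphQ n).connectedComponentMk (Quotient.mk (permSetoid n) x) = C}.Infinite ∧
    {C : (solGraphQ n).ConnectedComponent |
      ∃ x : {x : Fin n → ℤ // F x = 0}, 1 + ∑ j, x.1 j < 0 ∧
        (solGraphQ n).connectedComponentMk (Quotient.mk (permSetoid n) x) = C}.Infinite := by
  have hposS : ∀ a : ℕ, 0 < 1 + ∑ j, fpos n a j := by
    intro a; rw [sum_fpos hn]; positivity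
  have hnegS : ∀ t : ℕ, 1 + ∑ j, fneg n t j < 0 := by
    intro t; rw [sum_fneg hn]
    have : (0:ℤ) ≤ (t:ℤ) := Int.ofNat_nonneg t
    nlinarith
  refine ⟨⟨fpos n, fun a => ⟨F_fpos hn a, isRoot_fpos hn a, hposS a⟩, fun i j h => fpos_inj hn h⟩,
    ⟨fneg n, fun t => ⟨F_fneg hn t, isRoot_fneg hn t, hnegS t⟩, fun i j h => fneg_inj hn h⟩,
    ?_, ?_⟩
  · apply Set.infinite_of_injective_forall_mem
      (f := fun a : ℕ => (solGraphQ n).connectedComponentMk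
        (Quotient.mk (permSetoid n) ⟨fpos n a, F_fpos hn a⟩))
    · intro i j hij
      have hPhi := congrArg (Phi n) hij
      rw [Phi_mk, Phi_mk] at hPhi
      have h1 : phi n (Quotient.mk (permSetoid n) ⟨fpos n i, F_fpos hn i⟩) =
          Quotient.mk (permSetoid n) ⟨fpos n i, F_fpos hn i⟩ :=
        rootRep_eq_root _ (isRoot_fpos hn i)
      have h2 : phi n (Quotient.mk (permSetoid n) ⟨fpos n j, F_fpos hn j⟩) =
          Quotient.mk (permSetoid n) ⟨fpos n j, F_fpos hn j⟩ :=
        rootRep_eq_root _ (isRoot_fpos hn j)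
      rw [h1, h2] at hPhi
      exact fpos_inj hn (Quotient.exact hPhi)
    · intro a
      exact ⟨⟨fpos n a, F_fpos hn a⟩, hposS a, rfl⟩
  · apply Set.infinite_of_injective_forall_mem
      (f := fun t : ℕ => (solGraphQ n).connectedComponentMk
        (Quotient.mk (permSetoid n) ⟨fneg n t, F_fneg hn t⟩))
    · intro i j hij
      have hPhi := congrArg (Phi n) hij
      rw [Phi_mk, Phi_mk] at hPhi
      have h1 : phi n (Quotient.mk (permSetoid n) ⟨fneg n i, F_fneg hn i⟩) =
          Quotient.mk (permSetoid n) ⟨fneg n i, F_fneg hn i⟩ :=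
        rootRep_eq_root _ (isRoot_fneg hn i)
      have h2 : phi n (Quotient.mk (permSetoid n) ⟨fneg n j, F_fneg hn j⟩) =
          Quotient.mk (permSetoid n) ⟨fneg n j, F_fneg hn j⟩ :=
        rootRep_eq_root _ (isRoot_fneg hn j)
      rw [h1, h2] at hPhi
      exact fneg_inj hn (Quotient.exact hPhi)
    · intro t
      exact ⟨⟨fneg n t, F_fneg hn t⟩, hnegS t, rfl⟩
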